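/- Let p > 0. Set c_i = 60 for 1 ≤ i ≤ 25 and c_i = 20 for 26 ≤ i ≤ 100, and let M₂ be the 100×100 real matrix with (M₂)_{ii} = (c_i−1)p and (M₂)_{ij} = (2c_j/(3000−c_i))·(c_j−1)·p for i ≠ j. Then every eigenvalue μ of M₂ satisfies |μ| ≤ λ_max, where λ_max is the largest eigenvalue of the 2×2 matrix B = p·[[59 + 24·59·120/2940, 75·19·40/2940], [25·59·120/2980, 19 + 74·19·40/2980]]; that is, the spectral radius of M₂ equals the largest eigenvalue of B. -/

import Mathlib

open Matrix
open scoped ENNReal NNReal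
set_option maxHeartbeats 1000000

theorem scenario2_spectral_radius (p : ℝ) (hp : 0 < p)
    (c : Fin 100 → ℝ) (hc : ∀ i, c i = if (i : ℕ) < 25 then 60 else 20)
    (M₂ : Matrix (Fin 100) (Fin 100) ℝ)
    (hM₂ : ∀ i j, M₂ i j =
      if i = j then (c i - 1) * p else (2 * c j / (3000 - c i)) * (c j - 1) * p)
    (B : Matrix (Fin 2) (Fin 2) ℝ)
    (hB : B = p • !![59 + 24 * 59 * 120 / 2940, 75 * 19 * 40 / 2940;
                     25 * 59 * 120 / 2980, 19 + 74 * 19 * 40 / 2980]) :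
    ∃ lmax : ℝ, lmax ∈ spectrum ℝ B ∧ (∀ μ ∈ spectrum ℝ B, μ ≤ lmax) ∧
      (∀ μ ∈ spectrum ℂ (M₂.map (fun x : ℝ => (x : ℂ))), ‖μ‖ ≤ lmax) ∧
      spectralRadius ℂ (M₂.map (fun x : ℝ => (x : ℂ))) = ENNReal.ofReal lmax := by
  have hp2 : (0:ℝ) < p^2 := by positivity
  set t : ℝ := (1129234/7301) * p with ht
  set dB : ℝ := (23887389/7301) * p^2 with hdB
  have hdisc : (0:ℝ) < t^2 - 4*dB := by rw [ht, hdB]; nlinarith [hp2]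
  set s : ℝ := Real.sqrt (t^2 - 4*dB) with hs
  have hs2 : s^2 = t^2 - 4*dB := Real.sq_sqrt hdisc.le
  have hs0 : (0:ℝ) ≤ s := Real.sqrt_nonneg _
  have ht0 : (0:ℝ) < t := by rw [ht]; positivity
  have hdB0 : (0:ℝ) < dB := by rw [hdB]; positivity
  have hst : s ≤ t := by nlinarith
  set lmax : ℝ := (t + s) / 2 with hlm
  have hlmax0 : 0 ≤ lmax := by rw [hlm]; nlinarith
  have hquad : lmax^2 - t*lmax + dB = 0 := by rw [hlm]; linear_combination hs2 / 4
  -- characterization of the real spectrum of B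
  have hmemB : ∀ μ : ℝ, μ ∈ spectrum ℝ B ↔ μ^2 - t*μ + dB = 0 := by
    intro μ
    rw [spectrum.mem_iff, Matrix.isUnit_iff_isUnit_det, isUnit_iff_ne_zero, not_ne_iff]
    have hdet : (algebraMap ℝ (Matrix (Fin 2) (Fin 2) ℝ) μ - B).det = μ^2 - t*μ + dB := by
      subst hB
      rw [Matrix.det_fin_two, ht, hdB]
      simp [Matrix.algebraMap_matrix_apply, Matrix.smul_apply, smul_eq_mul]
      ring
    rw [hdet]
  -- real quadratic root bound
  have hrootle : ∀ μ : ℝ, μ^2 - t*μ + dB = 0 → μ ≤ lmax := by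
    intro μ hmu
    have hq2 : (2*μ - t)^2 = s^2 := by linear_combination 4*hmu - hs2
    rw [hlm]
    nlinarith [hq2, hs0, sq_nonneg (2*μ - t - s), sq_nonneg (2*μ - t + s)]
  have hrootge : ∀ μ : ℝ, μ^2 - t*μ + dB = 0 → 0 ≤ μ := by
    intro μ hmu
    have hq2 : (2*μ - t)^2 = s^2 := by linear_combination 4*hmu - hs2
    nlinarith [hq2, hs0, hst, sq_nonneg (2*μ - t - s), sq_nonneg (2*μ - t + s)]
  set Mc : Matrix (Fin 100) (Fin 100) ℂ := M₂.map (fun x : ℝ => (x : ℂ)) with hMcdef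
  set F0 : Finset (Fin 100) := Finset.univ.filter (fun j : Fin 100 => (j:ℕ) < 25) with hF0
  set F1 : Finset (Fin 100) := Finset.univ.filter (fun j : Fin 100 => ¬ (j:ℕ) < 25) with hF1
  have card25 : F0.card = 25 := by rw [hF0]; decide
  have card75 : F1.card = 75 := by rw [hF1]; decide
  -- row sum formula
  have hrow : ∀ (w : Fin 100 → ℂ) (i : Fin 100), (Mc *ᵥ w) i =
      (if (i:ℕ) < 25 then
        (2773/49)*(p:ℂ)*(w i) + ((118/49)*(p:ℂ)*(∑ j ∈ F0, w j) + (38/147)*(p:ℂ)*(∑ j ∈ F1, w j))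
       else
        (2793/149)*(p:ℂ)*(w i) + ((354/149)*(p:ℂ)*(∑ j ∈ F0, w j) + (38/149)*(p:ℂ)*(∑ j ∈ F1, w j))) := by
    intro w i
    have hsum : ∀ D r0 r1 : ℂ,
        (∑ j, ((if i = j then D else 0) + (if (j:ℕ) < 25 then r0 else r1)) * w j)
        = D * w i + (r0 * (∑ j ∈ F0, w j) + r1 * (∑ j ∈ F1, w j)) := by
      intro D r0 r1
      simp only [add_mul, Finset.sum_add_distrib, ite_mul, zero_mul]
      congr 1
      · simp
      · rw [hF0, hF1, Finset.sum_ite, Finset.mul_sum, Finset.mul_sum]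
    have hmv : (Mc *ᵥ w) i = ∑ j, Mc i j * w j := rfl
    by_cases hi : (i:ℕ) < 25
    · rw [if_pos hi, hmv, ← hsum ((2773/49)*(p:ℂ)) ((118/49)*(p:ℂ)) ((38/147)*(p:ℂ))]
      refine Finset.sum_congr rfl fun j _ => ?_
      congr 1
      rw [hMcdef, Matrix.map_apply, hM₂, hc i, hc j, if_pos hi]
      by_cases hij : i = j
      · subst hij
        rw [if_pos hi, if_pos rfl, if_pos rfl, if_pos hi]
        push_cast; ring
      · rw [if_neg hij, if_neg hij]
        by_cases hj : (j:ℕ) < 25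
        · rw [if_pos hj, if_pos hj]; push_cast; norm_num
        · rw [if_neg hj, if_neg hj]; push_cast; norm_num
    · rw [if_neg hi, hmv, ← hsum ((2793/149)*(p:ℂ)) ((354/149)*(p:ℂ)) ((38/149)*(p:ℂ))]
      refine Finset.sum_congr rfl fun j _ => ?_
      congr 1
      rw [hMcdef, Matrix.map_apply, hM₂, hc i, hc j, if_neg hi]
      by_cases hij : i = j
      · subst hij
        rw [if_neg hi, if_pos rfl, if_pos rfl, if_neg hi]
        push_cast; ring
      · rw [if_neg hij, if_neg hij]
        by_cases hj : (j:ℕ) < 25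
        · rw [if_pos hj, if_pos hj]; push_cast; norm_num
        · rw [if_neg hj, if_neg hj]; push_cast; norm_num
  -- eigenvector extraction
  have hspecC : ∀ μ : ℂ, μ ∈ spectrum ℂ Mc → ∃ v : Fin 100 → ℂ, v ≠ 0 ∧ Mc *ᵥ v = μ • v := by
    intro μ hμ
    rw [spectrum.mem_iff, Matrix.isUnit_iff_isUnit_det, isUnit_iff_ne_zero, not_ne_iff,
      ← Matrix.exists_mulVec_eq_zero_iff] at hμ
    obtain ⟨v, hv0, hv⟩ := hμ
    refine ⟨v, hv0, ?_⟩
    rw [Algebra.algebraMap_eq_smul_one, Matrix.sub_mulVec, Matrix.smul_mulVec,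
      Matrix.one_mulVec, sub_eq_zero] at hv
    exact hv.symm
  -- spectral bound over ℂ
  have hboundC : ∀ μ ∈ spectrum ℂ Mc, ‖μ‖ ≤ lmax := by
    intro μ hμ
    obtain ⟨v, hv0, heig⟩ := hspecC μ hμ
    set S0 : ℂ := ∑ j ∈ F0, v j with hS0
    set S1 : ℂ := ∑ j ∈ F1, v j with hS1
    have hkey : ∀ i : Fin 100, μ * v i =
        (if (i:ℕ) < 25 then (2773/49)*(p:ℂ)*(v i) + ((118/49)*(p:ℂ)*S0 + (38/147)*(p:ℂ)*S1)
         else (2793/149)*(p:ℂ)*(v i) + ((354/149)*(p:ℂ)*S0 + (38/149)*(p:ℂ)*S1)) := by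
      intro i
      calc μ * v i = (Mc *ᵥ v) i := by rw [heig]; simp
      _ = _ := hrow v i
    have e0 : μ * S0 = (5723/49)*(p:ℂ)*S0 + (950/147)*(p:ℂ)*S1 := by
      have h1 : μ * S0 = ∑ i ∈ F0, μ * v i := by rw [hS0, Finset.mul_sum]
      have h2 : ∑ i ∈ F0, μ * v i
          = ∑ i ∈ F0, ((2773/49)*(p:ℂ)*(v i) + ((118/49)*(p:ℂ)*S0 + (38/147)*(p:ℂ)*S1)) := by
        refine Finset.sum_congr rfl fun i hi => ?_
        rw [hkey i, if_pos ((Finset.mem_filter.mp hi).2)]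
      rw [h1, h2, Finset.sum_add_distrib, ← Finset.mul_sum, ← hS0, Finset.sum_const, card25,
        nsmul_eq_mul]
      push_cast
      ring
    have e1 : μ * S1 = (26550/149)*(p:ℂ)*S0 + (5643/149)*(p:ℂ)*S1 := by
      have h1 : μ * S1 = ∑ i ∈ F1, μ * v i := by rw [hS1, Finset.mul_sum]
      have h2 : ∑ i ∈ F1, μ * v i
          = ∑ i ∈ F1, ((2793/149)*(p:ℂ)*(v i) + ((354/149)*(p:ℂ)*S0 + (38/149)*(p:ℂ)*S1)) := by
        refine Finset.sum_congr rfl fun i hi => ?_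
        rw [hkey i, if_neg ((Finset.mem_filter.mp hi).2)]
      rw [h1, h2, Finset.sum_add_distrib, ← Finset.mul_sum, ← hS1, Finset.sum_const, card75,
        nsmul_eq_mul]
      push_cast
      ring
    by_cases h1 : μ = (2773/49)*(p:ℂ)
    · have hn : ‖μ‖ = (2773/49)*p := by
        rw [h1, show ((2773/49 : ℂ))*(p:ℂ) = (((2773/49)*p : ℝ) : ℂ) by push_cast; ring,
          Complex.norm_real, Real.norm_of_nonneg (by positivity)]
      rw [hn, hlm, ht]
      linarith [hs0, hp]
    · by_cases h2 : μ = (2793/149)*(p:ℂ)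
      · have hn : ‖μ‖ = (2793/149)*p := by
          rw [h2, show ((2793/149 : ℂ))*(p:ℂ) = (((2793/149)*p : ℝ) : ℂ) by push_cast; ring,
            Complex.norm_real, Real.norm_of_nonneg (by positivity)]
        rw [hn, hlm, ht]
        linarith [hs0, hp]
      · have hSne : S0 ≠ 0 ∨ S1 ≠ 0 := by
          by_contra hcon
          push_neg at hcon
          obtain ⟨hS0z, hS1z⟩ := hcon
          apply hv0
          funext i
          have hk := hkey i
          rw [hS0z, hS1z] at hk
          by_cases hi : (i:ℕ) < 25
          · rw [if_pos hi] at hk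
            have hz : (μ - (2773/49)*(p:ℂ)) * v i = 0 := by linear_combination hk
            rcases mul_eq_zero.mp hz with h | h
            · exact absurd (by linear_combination h) h1
            · exact h
          · rw [if_neg hi] at hk
            have hz : (μ - (2793/149)*(p:ℂ)) * v i = 0 := by linear_combination hk
            rcases mul_eq_zero.mp hz with h | h
            · exact absurd (by linear_combination h) h2
            · exact h
        have hq2 : μ^2 - (1129234/7301)*(p:ℂ)*μ + (23887389/7301)*(p:ℂ)^2 = 0 := by
          rcases hSne with hS | hS
          · have hz : (μ^2 - (1129234/7301)*(p:ℂ)*μ + (23887389/7301)*(p:ℂ)^2) * S0 = 0 := by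
              linear_combination (μ - (5643/149)*(p:ℂ)) * e0 + (950/147)*(p:ℂ) * e1
            exact (mul_eq_zero.mp hz).resolve_right hS
          · have hz : (μ^2 - (1129234/7301)*(p:ℂ)*μ + (23887389/7301)*(p:ℂ)^2) * S1 = 0 := by
              linear_combination (μ - (5723/49)*(p:ℂ)) * e1 + (26550/149)*(p:ℂ) * e0
            exact (mul_eq_zero.mp hz).resolve_right hS
        -- μ is real
        have hq3 : μ^2 - (((1129234/7301)*p : ℝ):ℂ)*μ + (((23887389/7301)*p^2 : ℝ):ℂ) = 0 := by
          push_cast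
          linear_combination hq2
        rw [Complex.ext_iff] at hq3
        obtain ⟨hre, him⟩ := hq3
        simp only [Complex.add_re, Complex.sub_re, Complex.add_im, Complex.sub_im, pow_two,
          Complex.mul_re, Complex.mul_im, Complex.ofReal_re, Complex.ofReal_im,
          Complex.zero_re, Complex.zero_im, zero_mul, mul_zero, sub_zero, zero_sub, add_zero,
          zero_add, neg_zero] at hre him
        by_cases hy : μ.im = 0
        · have hmu : μ = ((μ.re : ℝ) : ℂ) := Complex.ext rfl (by simp [hy])
          rw [hmu, Complex.norm_real]
          have hx : μ.re^2 - t*μ.re + dB = 0 := by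
            rw [ht, hdB]
            rw [hy] at hre
            linear_combination hre
          rw [Real.norm_of_nonneg (hrootge _ hx)]
          exact hrootle _ hx
        · exfalso
          have h5 : (2*μ.re - (1129234/7301)*p) * μ.im = 0 := by linear_combination him
          have h6 := (mul_eq_zero.mp h5).resolve_right hy
          have hdisc2 : (0:ℝ) < ((1129234/7301)*p)^2 - 4*((23887389/7301)*p^2) := by
            nlinarith [hp2]
          nlinarith [hre, h6, pow_two_pos_of_ne_zero hy, hdisc2]
  -- lmax is an eigenvalue of Mc
  have hlmem : ((lmax : ℝ) : ℂ) ∈ spectrum ℂ Mc := by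
    rw [spectrum.mem_iff, Matrix.isUnit_iff_isUnit_det, isUnit_iff_ne_zero, not_ne_iff,
      ← Matrix.exists_mulVec_eq_zero_iff]
    refine ⟨fun i => if (i:ℕ) < 25 then (((950/49)*p : ℝ):ℂ) else ((lmax - (5723/49)*p : ℝ):ℂ),
      ?_, ?_⟩
    · intro h
      have h0 := congrFun h (⟨0, by norm_num⟩ : Fin 100)
      simp only [Pi.zero_apply] at h0
      rw [if_pos (by norm_num)] at h0
      have : (950/49)*p = 0 := by exact_mod_cast h0
      nlinarith [hp]
    · set v : Fin 100 → ℂ :=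
        fun i => if (i:ℕ) < 25 then (((950/49)*p : ℝ):ℂ) else ((lmax - (5723/49)*p : ℝ):ℂ) with hv
      rw [Algebra.algebraMap_eq_smul_one, Matrix.sub_mulVec, Matrix.smul_mulVec,
        Matrix.one_mulVec, sub_eq_zero]
      funext i
      have hsum0 : ∑ j ∈ F0, v j = 25*(((950/49)*p : ℝ):ℂ) := by
        rw [Finset.sum_congr rfl
          (fun j hj => if_pos ((Finset.mem_filter.mp hj).2)),
          Finset.sum_const, card25, nsmul_eq_mul]
        norm_num
      have hsum1 : ∑ j ∈ F1, v j = 75*((lmax - (5723/49)*p : ℝ):ℂ) := by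
        rw [Finset.sum_congr rfl
          (fun j hj => if_neg ((Finset.mem_filter.mp hj).2)),
          Finset.sum_const, card75, nsmul_eq_mul]
        norm_num
      have hquad' : lmax^2 - ((1129234/7301)*p)*lmax + (23887389/7301)*p^2 = 0 := by
        have h := hquad; rw [ht, hdB] at h; exact h
      have hqc : ((lmax^2 - ((1129234/7301)*p)*lmax + (23887389/7301)*p^2 : ℝ) : ℂ) = 0 := by
        rw [hquad']; norm_num
      push_cast at hqc
      rw [Pi.smul_apply, smul_eq_mul, hrow v i]
      by_cases hi : (i:ℕ) < 25
      · rw [if_pos hi, hsum0, hsum1, hv]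
        simp only [if_pos hi]
        push_cast
        ring
      · rw [if_neg hi, hsum0, hsum1, hv]
        simp only [if_neg hi]
        push_cast
        linear_combination hqc
  refine ⟨lmax, (hmemB lmax).mpr hquad, fun μ hμ => hrootle μ ((hmemB μ).mp hμ), hboundC, ?_⟩
  apply le_antisymm
  · rw [spectralRadius]
    refine iSup₂_le fun k hk => ?_
    rw [← enorm_eq_nnnorm, ← ofReal_norm]
    exact ENNReal.ofReal_le_ofReal (hboundC k hk)
  · have h1 : ENNReal.ofReal lmax = (‖((lmax:ℝ):ℂ)‖₊ : ℝ≥0∞) := by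
      rw [← enorm_eq_nnnorm, ← ofReal_norm, Complex.norm_real, Real.norm_of_nonneg hlmax0]
    rw [h1, spectralRadius]
    exact le_iSup₂ (f := fun (k : ℂ) (_ : k ∈ spectrum ℂ Mc) => (‖k‖₊ : ℝ≥0∞)) _ hlmem
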